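/- Let K be a field, m, n ∈ ℕ with n ≤ m, and let c : {1,…,m} → {1,…,n} be a surjection with fibre sizes q_k = |c⁻¹(k)| ≥ 1. Let Z' be an n×n matrix over K and let Z be the m×m matrix defined by Z_{ij} = Z'_{c(i),c(j)}. For 0 ≤ r ≤ m set d_r = ∑_{R' ⊆ {1,…,m}, |R'| = r} det(Z∖R') and e_r = ∑_{R' ⊆ {1,…,m}, |R'| = r} s(adj(Z∖R')). Then d_r = 0 and e_r = 0 for all r < m − n, and d_{m−n} = (q_1 ⋯ q_n) · det(Z') and e_{m−n} = (q_1 ⋯ q_n) · s(adj(Z')). -/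

import Mathlib

open Matrix

/-- The sum of all entries of a square matrix. -/
def matS {ι R : Type*} [Fintype ι] [CommRing R] (M : Matrix ι ι R) : R :=
  ∑ i, ∑ j, M i j

section Aux

variable {R ι : Type*} [CommRing R] [Fintype ι] [DecidableEq ι]

/-- Multilinear expansion of `det (M + t • V)` over subsets of rows. -/
lemma aux_master (M : Matrix ι ι R) (v : ι → ι → R) (t : R) :
    (M + Matrix.of fun i j => t * v i j).det
      = ∑ s : Finset ι, t ^ s.card *
        (Matrix.of fun i j => if i ∈ s then v i j else M i j).det := by
  have hdet : ∀ rows : ι → ι → R,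
      (Matrix.of rows).det
        = (Matrix.detRowAlternating : (ι → R) [⋀^ι]→ₗ[R] R).toMultilinearMap rows :=
    fun _ => rfl
  have h0 : (M + Matrix.of fun i j => t * v i j)
      = Matrix.of ((fun i => t • v i) + fun i => M i) := by
    ext i j
    simp [add_comm]
  rw [h0, hdet, MultilinearMap.map_add_univ]
  refine Finset.sum_congr rfl fun s _ => ?_
  have h1 : s.piecewise (fun i => t • v i) (fun i => M i)
      = s.piecewise (fun i => t • (s.piecewise v fun i => M i) i)
          (s.piecewise v fun i => M i) := by
    funext i
    by_cases hi : i ∈ s <;> simp [Finset.piecewise, hi]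
  have h2 : (Matrix.of fun i j => if i ∈ s then v i j else M i j)
      = Matrix.of (s.piecewise v fun i => M i) := by
    ext i j
    by_cases hi : i ∈ s <;> simp [Finset.piecewise, hi]
  rw [h1, MultilinearMap.map_piecewise_smul, Finset.prod_const, smul_eq_mul, h2, hdet]

/-- Determinant of a matrix whose rows on `s` are standard basis rows. -/
lemma aux_det_ite_one (M : Matrix ι ι R) (s : Finset ι) :
    (Matrix.of fun i j => if i ∈ s then (1 : Matrix ι ι R) i j else M i j).det
      = (M.submatrix (fun i : {i // i ∈ sᶜ} => (i : ι))
          (fun i : {i // i ∈ sᶜ} => (i : ι))).det := by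
  classical
  let e1 : {i // i ∈ sᶜ} ≃ {i // ¬ i ∈ s} := Equiv.subtypeEquivRight (by simp)
  let σ : {i // i ∈ s} ⊕ {i // i ∈ sᶜ} ≃ ι :=
    ((Equiv.refl {i // i ∈ s}).sumCongr e1).trans (Equiv.sumCompl (· ∈ s))
  have hσl : ∀ i : {i // i ∈ s}, σ (Sum.inl i) = (i : ι) := fun i => rfl
  have hσr : ∀ i : {i // i ∈ sᶜ}, σ (Sum.inr i) = (i : ι) := fun i => rfl
  rw [← Matrix.det_submatrix_equiv_self σ]
  have hblock : (Matrix.of fun i j => if i ∈ s then (1 : Matrix ι ι R) i j else M i j).submatrix σ σ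
      = Matrix.fromBlocks 1 0
          (Matrix.of fun (i : {i // i ∈ sᶜ}) (j : {i // i ∈ s}) => M (i : ι) (j : ι))
          (M.submatrix (fun i : {i // i ∈ sᶜ} => (i : ι))
            (fun i : {i // i ∈ sᶜ} => (i : ι))) := by
    ext i j
    rcases i with i | i <;> rcases j with j | j
    · have hi : (i : ι) ∈ s := i.2
      simp only [Matrix.submatrix_apply, hσl, Matrix.of_apply, if_pos hi,
        Matrix.fromBlocks_apply₁₁, Matrix.one_apply]
      by_cases h : i = j
      · simp [h]
      · rw [if_neg (fun hh => h (Subtype.ext hh)), if_neg h]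
    · have hi : (i : ι) ∈ s := i.2
      have hj : (j : ι) ∉ s := Finset.mem_compl.mp j.2
      have hne : (i : ι) ≠ (j : ι) := fun h => hj (h ▸ hi)
      simp only [Matrix.submatrix_apply, hσl, hσr, Matrix.of_apply, if_pos hi,
        Matrix.fromBlocks_apply₁₂, Matrix.one_apply, if_neg hne, Matrix.zero_apply]
    · have hi : (i : ι) ∉ s := Finset.mem_compl.mp i.2
      simp only [Matrix.submatrix_apply, hσl, hσr, Matrix.of_apply, if_neg hi,
        Matrix.fromBlocks_apply₂₁]
    · have hi : (i : ι) ∉ s := Finset.mem_compl.mp i.2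
      simp only [Matrix.submatrix_apply, hσr, Matrix.of_apply, if_neg hi,
        Matrix.fromBlocks_apply₂₂, Matrix.submatrix_apply]
  rw [hblock, Matrix.det_fromBlocks_zero₁₂, Matrix.det_one, one_mul]

/-- Extracting a coefficient from a sum indexed by subsets. -/
lemma aux_coeffSum (F : Finset ι → R) (k : ℕ) :
    (∑ s : Finset ι, Polynomial.X ^ s.card * Polynomial.C (F s)).coeff k
      = ∑ s ∈ Finset.powersetCard k (Finset.univ : Finset ι), F s := by
  rw [Polynomial.finset_sum_coeff]
  have h : ∀ s : Finset ι, (Polynomial.X ^ s.card * Polynomial.C (F s)).coeff k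
      = if s.card = k then F s else 0 := by
    intro s
    rw [mul_comm, Polynomial.coeff_C_mul_X_pow]
    simp [eq_comm]
  simp_rw [h]
  rw [← Finset.sum_filter]
  congr 1
  rw [Finset.powersetCard_eq_filter, Finset.powerset_univ]

/-- Sum of dets with a row replaced by all-ones rows equals the entry sum of the adjugate. -/
lemma aux_sum_updateRow (M : Matrix ι ι R) :
    ∑ i, (M.updateRow i fun _ => (1 : R)).det = matS M.adjugate := by
  have h : ∀ i, (M.updateRow i fun _ => (1 : R)).det = ∑ j, M.adjugate j i := by
    intro i
    have h1 : (fun _ : ι => (1 : R)) = ∑ j, Pi.single j (1 : R) := by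
      funext k
      simp [Finset.sum_apply, Pi.single_apply]
    rw [← Matrix.det_transpose, ← Matrix.updateCol_transpose, ← Matrix.cramer_apply, h1,
      map_sum]
    rw [Finset.sum_apply]
    refine Finset.sum_congr rfl fun j _ => ?_
    rw [Matrix.adjugate_def]
    rfl
  simp_rw [h]
  rw [matS, Finset.sum_comm]

/-- Coefficients 0 and 1 of `det (C M + X J)`. -/
lemma aux_coeff_det_lin (M : Matrix ι ι R) (k : ℕ) (hk : k ≤ 1) :
    (Matrix.of fun i j => Polynomial.C (M i j) + Polynomial.X).det.coeff k
      = if k = 0 then M.det else matS M.adjugate := by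
  have h0 : (Matrix.of fun i j => Polynomial.C (M i j) + Polynomial.X : Matrix ι ι (Polynomial R))
      = M.map Polynomial.C + Matrix.of fun i j => Polynomial.X * 1 := by
    ext i j
    simp [Matrix.map_apply]
  have hF : ∀ s : Finset ι,
      (Matrix.of fun i j => if i ∈ s then (1 : Polynomial R) else (M.map Polynomial.C) i j).det
        = Polynomial.C (Matrix.of fun i j => if i ∈ s then (1 : R) else M i j).det := by
    intro s
    rw [RingHom.map_det]
    congr 1
    ext i j
    simp [Matrix.map_apply, apply_ite Polynomial.C]
  rw [h0, aux_master]
  rw [show (∑ s : Finset ι, Polynomial.X ^ s.card *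
        (Matrix.of fun i j => if i ∈ s then (1:Polynomial R) else (M.map Polynomial.C) i j).det)
      = ∑ s : Finset ι, Polynomial.X ^ s.card *
        Polynomial.C ((Matrix.of fun i j => if i ∈ s then (1:R) else M i j).det) from
    Finset.sum_congr rfl fun s _ => by rw [hF]]
  rw [aux_coeffSum]
  interval_cases k
  · rw [Finset.powersetCard_zero, Finset.sum_singleton, if_pos rfl]
    have : (Matrix.of fun i j => if i ∈ (∅ : Finset ι) then (1:R) else M i j) = M := by
      ext i j
      simp
    rw [this]
  · rw [Finset.powersetCard_one, Finset.sum_map]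
    simp only [Function.Embedding.coeFn_mk, if_neg one_ne_zero]
    rw [← aux_sum_updateRow M]
    refine Finset.sum_congr rfl fun i _ => ?_
    congr 1
    ext a b
    by_cases ha : a = i <;> simp [Matrix.updateRow_apply, ha]

end Aux

/-- Weinstein–Aronszajn over a field, with non-zero scalar. -/
lemma aux_field_wa {F : Type*} [Field F] {m n : ℕ} (hnm : n ≤ m) {u : F} (hu : u ≠ 0)
    (A : Matrix (Fin m) (Fin n) F) (B : Matrix (Fin n) (Fin m) F) :
    (u • (1 : Matrix (Fin m) (Fin m) F) + A * B).det
      = u ^ (m - n) * (u • (1 : Matrix (Fin n) (Fin n) F) + B * A).det := by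
  have e1 : u • (1 : Matrix (Fin m) (Fin m) F) + A * B = u • (1 + (u⁻¹ • A) * B) := by
    rw [smul_add]
    congr 1
    rw [Matrix.smul_mul, smul_smul, mul_inv_cancel₀ hu, one_smul]
  have e2 : u • (1 : Matrix (Fin n) (Fin n) F) + B * A = u • (1 + B * (u⁻¹ • A)) := by
    rw [smul_add]
    congr 1
    rw [Matrix.mul_smul, smul_smul, mul_inv_cancel₀ hu, one_smul]
  rw [e1, e2, Matrix.det_smul, Matrix.det_smul, Matrix.det_one_add_mul_comm,
    Fintype.card_fin, Fintype.card_fin, ← mul_assoc, ← pow_add, Nat.sub_add_cancel hnm]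

/-- Weinstein–Aronszajn over the polynomial ring of a domain. -/
lemma aux_wa_poly {D : Type*} [CommRing D] [IsDomain D] {m n : ℕ} (hnm : n ≤ m)
    (A : Matrix (Fin m) (Fin n) D) (B : Matrix (Fin n) (Fin m) D) :
    ((Polynomial.X : Polynomial D) • (1 : Matrix (Fin m) (Fin m) (Polynomial D)) + (A * B).map Polynomial.C).det
      = Polynomial.X ^ (m - n) *
        ((Polynomial.X : Polynomial D) • (1 : Matrix (Fin n) (Fin n) (Polynomial D)) + (B * A).map Polynomial.C).det := by
  let F := FractionRing (Polynomial D)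
  have hinj : Function.Injective (algebraMap (Polynomial D) F) := IsFractionRing.injective _ _
  apply hinj
  set φ := algebraMap (Polynomial D) F
  have hmap : ∀ (k : ℕ) (M : Matrix (Fin k) (Fin k) D),
      (((Polynomial.X : Polynomial D) • (1 : Matrix (Fin k) (Fin k) (Polynomial D)) + M.map Polynomial.C).map φ)
        = φ Polynomial.X • 1 + M.map (φ.comp Polynomial.C) := by
    intro k M
    ext i j
    by_cases h : i = j <;>
      simp [Matrix.map_apply, Matrix.one_apply, h, mul_comm]
  have hu : φ Polynomial.X ≠ 0 := by
    intro h
    exact Polynomial.X_ne_zero (hinj (by simpa using h))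
  rw [_root_.map_mul, RingHom.map_det, RingHom.map_det, _root_.map_pow, RingHom.mapMatrix_apply,
    RingHom.mapMatrix_apply, hmap, hmap]
  have hAB : (A * B).map (φ.comp Polynomial.C)
      = A.map (φ.comp Polynomial.C) * B.map (φ.comp Polynomial.C) := by
    rw [Matrix.map_mul]
  have hBA : (B * A).map (φ.comp Polynomial.C)
      = B.map (φ.comp Polynomial.C) * A.map (φ.comp Polynomial.C) := by
    rw [Matrix.map_mul]
  rw [hAB, hBA]
  exact aux_field_wa hnm hu _ _

theorem stmt13 {K : Type*} [Field K] (m n : ℕ) (hnm : n ≤ m)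
    (c : Fin m → Fin n) (hc : Function.Surjective c)
    (Z' : Matrix (Fin n) (Fin n) K)
    (Z : Matrix (Fin m) (Fin m) K) (hZ : ∀ i j, Z i j = Z' (c i) (c j)) :
    let q : Fin n → ℕ := fun k => (Finset.univ.filter fun i => c i = k).card
    let d : ℕ → K := fun r =>
      ∑ R' ∈ Finset.powersetCard r (Finset.univ : Finset (Fin m)),
        (Z.submatrix (fun i : {i // i ∈ R'ᶜ} => (i : Fin m))
          (fun i : {i // i ∈ R'ᶜ} => (i : Fin m))).det
    let e : ℕ → K := fun r =>
      ∑ R' ∈ Finset.powersetCard r (Finset.univ : Finset (Fin m)),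
        matS (Z.submatrix (fun i : {i // i ∈ R'ᶜ} => (i : Fin m))
          (fun i : {i // i ∈ R'ᶜ} => (i : Fin m))).adjugate
    (∀ k, 1 ≤ q k) ∧
    (∀ r < m - n, d r = 0 ∧ e r = 0) ∧
    d (m - n) = (∏ k, (q k : K)) * Z'.det ∧
    e (m - n) = (∏ k, (q k : K)) * matS Z'.adjugate := by
  intro q d e
  classical
  -- the zero-one matrix A
  set R := Polynomial K
  set A : Matrix (Fin m) (Fin n) R := Matrix.of fun i k => if c i = k then (1 : R) else 0 with hA
  set Wn : Matrix (Fin n) (Fin n) R :=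
    Matrix.of fun k l => Polynomial.C (Z' k l) + Polynomial.X with hWn
  set Wbig : Matrix (Fin m) (Fin m) R :=
    Matrix.of fun i j => Polynomial.C (Z i j) + Polynomial.X with hWbig
  have hfac : A * (Wn * Aᵀ) = Wbig := by
    ext i j
    simp [hA, hWn, hWbig, Matrix.mul_apply, Matrix.transpose_apply, ite_mul, mul_ite,
      Finset.sum_ite_eq, Finset.sum_ite_eq', hZ i j]
  have hdiag : (Wn * Aᵀ) * A = Wn * Matrix.diagonal (fun k => (q k : R)) := by
    rw [Matrix.mul_assoc]
    congr 1
    refine Matrix.ext fun k l => ?_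
    simp only [Matrix.mul_apply, Matrix.transpose_apply, hA, Matrix.of_apply,
      Matrix.diagonal_apply, ite_mul, one_mul, zero_mul]
    by_cases hkl : k = l
    · subst hkl
      rw [if_pos rfl]
      have h1 : ∀ i : Fin m, (if c i = k then (if c i = k then (1:R) else 0) else 0)
          = if c i = k then (1:R) else 0 := by
        intro i; by_cases h : c i = k <;> simp [h]
      simp_rw [h1]
      simp [Finset.sum_boole, q]
    · rw [if_neg hkl]
      refine Finset.sum_eq_zero fun i _ => ?_
      by_cases h : c i = k
      · rw [if_pos h, if_neg (h ▸ hkl)]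
      · rw [if_neg h]
  -- the two-variable polynomial identity
  have key := aux_wa_poly (D := R) hnm A (Wn * Aᵀ)
  rw [hfac, hdiag] at key
  -- expansions of both sides as polynomials in the outer variable
  have hexpand : ∀ (N : ℕ) (W : Matrix (Fin N) (Fin N) R),
      ((Polynomial.X : Polynomial R) • (1 : Matrix (Fin N) (Fin N) (Polynomial R)) + W.map Polynomial.C).det
        = ∑ s : Finset (Fin N), Polynomial.X ^ s.card *
            Polynomial.C ((W.submatrix (fun i : {i // i ∈ sᶜ} => (i : Fin N))
              (fun i : {i // i ∈ sᶜ} => (i : Fin N))).det) := by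
    intro N W
    have h0 : (Polynomial.X : Polynomial R) • (1 : Matrix (Fin N) (Fin N) (Polynomial R)) + W.map Polynomial.C
        = W.map Polynomial.C + Matrix.of fun i j =>
            Polynomial.X * (1 : Matrix (Fin N) (Fin N) (Polynomial R)) i j := by
      refine Matrix.ext fun i j => ?_
      simp [Matrix.map_apply, add_comm]
    refine (congrArg Matrix.det h0).trans ((aux_master _ _ _).trans ?_)
    refine Finset.sum_congr rfl fun s _ => ?_
    congr 1
    rw [aux_det_ite_one, RingHom.map_det, RingHom.mapMatrix_apply]
    rfl
  rw [hexpand] at key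
  -- coefficient extraction in the outer variable
  have hDcoeff : ∀ r : ℕ,
      (∑ s : Finset (Fin m), Polynomial.X ^ s.card *
          Polynomial.C ((Wbig.submatrix (fun i : {i // i ∈ sᶜ} => (i : Fin m))
            (fun i : {i // i ∈ sᶜ} => (i : Fin m))).det)).coeff r
        = ∑ s ∈ Finset.powersetCard r (Finset.univ : Finset (Fin m)),
            (Wbig.submatrix (fun i : {i // i ∈ sᶜ} => (i : Fin m))
              (fun i : {i // i ∈ sᶜ} => (i : Fin m))).det := aux_coeffSum _
  -- identify inner coefficients with d and e
  have hWsub : ∀ s : Finset (Fin m),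
      Wbig.submatrix (fun i : {i // i ∈ sᶜ} => (i : Fin m))
          (fun i : {i // i ∈ sᶜ} => (i : Fin m))
        = Matrix.of fun i j => Polynomial.C ((Z.submatrix
            (fun i : {i // i ∈ sᶜ} => (i : Fin m))
            (fun i : {i // i ∈ sᶜ} => (i : Fin m))) i j) + Polynomial.X := by
    intro s
    refine Matrix.ext fun i j => ?_
    simp [hWbig]
  have hde : ∀ (r : ℕ) (k : ℕ), k ≤ 1 →
      (∑ s ∈ Finset.powersetCard r (Finset.univ : Finset (Fin m)),
          (Wbig.submatrix (fun i : {i // i ∈ sᶜ} => (i : Fin m))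
            (fun i : {i // i ∈ sᶜ} => (i : Fin m))).det).coeff k
        = if k = 0 then d r else e r := by
    intro r k hk
    rw [Polynomial.finset_sum_coeff]
    by_cases hk0 : k = 0
    · subst hk0
      simp only [if_pos rfl]
      refine Finset.sum_congr rfl fun s _ => ?_
      rw [hWsub s, aux_coeff_det_lin _ 0 (by norm_num), if_pos rfl]
    · have hk1 : k = 1 := by omega
      subst hk1
      simp only [if_neg one_ne_zero]
      refine Finset.sum_congr rfl fun s _ => ?_
      rw [hWsub s, aux_coeff_det_lin _ 1 le_rfl, if_neg one_ne_zero]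
  -- coefficient 0 of the right-hand determinant
  have hQ0 : (((Polynomial.X : Polynomial R) • (1 : Matrix (Fin n) (Fin n) (Polynomial R))
        + (Wn * Matrix.diagonal fun k => (q k : R)).map Polynomial.C).det).coeff 0
      = Wn.det * ∏ k, (q k : R) := by
    have h2 : (Polynomial.evalRingHom (0 : R)).mapMatrix
          ((Polynomial.X : Polynomial R) • (1 : Matrix (Fin n) (Fin n) (Polynomial R))
            + (Wn * Matrix.diagonal fun k => (q k : R)).map Polynomial.C)
        = Wn * Matrix.diagonal fun k => (q k : R) := by
      refine Matrix.ext fun i j => ?_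
      by_cases h : i = j <;>
        simp [Matrix.map_apply, Matrix.one_apply, h]
    rw [Polynomial.coeff_zero_eq_eval_zero, ← Polynomial.coe_evalRingHom, RingHom.map_det, h2,
      Matrix.det_mul, Matrix.det_diagonal]
  -- main coefficient identity : coeff r of LHS
  have hcoeff : ∀ r : ℕ,
      (∑ s ∈ Finset.powersetCard r (Finset.univ : Finset (Fin m)),
          (Wbig.submatrix (fun i : {i // i ∈ sᶜ} => (i : Fin m))
            (fun i : {i // i ∈ sᶜ} => (i : Fin m))).det)
        = (Polynomial.X ^ (m - n) *
            (((Polynomial.X : Polynomial R) • (1 : Matrix (Fin n) (Fin n) (Polynomial R))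
              + (Wn * Matrix.diagonal fun k => (q k : R)).map Polynomial.C).det)).coeff r := by
    intro r
    rw [← hDcoeff r, key]
  have hvanish : ∀ r < m - n,
      (∑ s ∈ Finset.powersetCard r (Finset.univ : Finset (Fin m)),
          (Wbig.submatrix (fun i : {i // i ∈ sᶜ} => (i : Fin m))
            (fun i : {i // i ∈ sᶜ} => (i : Fin m))).det) = 0 := by
    intro r hr
    rw [hcoeff r, mul_comm, Polynomial.coeff_mul_X_pow', if_neg (by omega)]
  have htop :
      (∑ s ∈ Finset.powersetCard (m - n) (Finset.univ : Finset (Fin m)),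
          (Wbig.submatrix (fun i : {i // i ∈ sᶜ} => (i : Fin m))
            (fun i : {i // i ∈ sᶜ} => (i : Fin m))).det)
        = Wn.det * ∏ k, (q k : R) := by
    rw [hcoeff (m - n), mul_comm, Polynomial.coeff_mul_X_pow', if_pos le_rfl, Nat.sub_self, hQ0]
  -- now extract coefficients in the inner variable
  have hprod : (∏ k, (q k : R)) = Polynomial.C (∏ k, (q k : K)) := by
    rw [map_prod]
    simp
  have hWnc : ∀ k : ℕ, k ≤ 1 → Wn.det.coeff k = if k = 0 then Z'.det else matS Z'.adjugate := by
    intro k hk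
    rw [hWn]
    exact aux_coeff_det_lin Z' k hk
  refine ⟨?_, ?_, ?_, ?_⟩
  · intro k
    obtain ⟨i, hi⟩ := hc k
    exact Finset.card_pos.2 ⟨i, Finset.mem_filter.2 ⟨Finset.mem_univ _, hi⟩⟩
  · intro r hr
    have h := hvanish r hr
    constructor
    · have := hde r 0 (by norm_num)
      rw [h] at this
      simpa using this.symm
    · have := hde r 1 le_rfl
      rw [h] at this
      simpa using this.symm
  · have h1 := hde (m - n) 0 (by norm_num)
    rw [htop] at h1
    rw [if_pos rfl] at h1
    rw [← h1, hprod, Polynomial.coeff_mul_C, hWnc 0 (by norm_num), if_pos rfl, mul_comm]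
  · have h1 := hde (m - n) 1 le_rfl
    rw [htop] at h1
    rw [if_neg one_ne_zero] at h1
    rw [← h1, hprod, Polynomial.coeff_mul_C, hWnc 1 le_rfl, if_neg one_ne_zero, mul_comm]
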